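/- For every m ∈ ℕ∞ (i.e. m ∈ WithTop ℕ), the assignment declaring a sieve S on [k] to be covering if and only if every morphism f : [l] ⟶ [k] with (l : ℕ∞) < m belongs to S, defines a Grothendieck topology J_m on the simplex category; moreover the map m ↦ J_m is a bijection from ℕ∞ onto the set of all Grothendieck topologies on the simplex category (m = 0 gives the trivial topology in which every sieve covers, and m = ∞ gives the discrete topology in which only maximal sieves cover). -/

import Mathlib

open CategoryTheory Simplicial Opposite

namespace Stmt6Aux

open SimplexCategory

/-- The candidate topology: a sieve covers iff it contains all maps from simplices
of dimension `< m`. -/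
def Jm (m : ℕ∞) : GrothendieckTopology SimplexCategory where
  sieves X := {S | ∀ (Y : SimplexCategory) (f : Y ⟶ X), (Y.len : ℕ∞) < m → S.arrows f}
  top_mem' := by intro X Y f _; trivial
  pullback_stable' := by
    intro X Y S g hS Z f hZ
    exact hS Z (f ≫ g) hZ
  transitive' := by
    intro X S hS R hR Y f hf
    have h1 := hR (hS Y f hf) Y (𝟙 Y) hf
    simpa using h1

/-- The sieve of maps factoring through an object of dimension `< k`. -/
def fsieve (k : ℕ) (X : SimplexCategory) : Sieve X where
  arrows Y f := ∃ (Z : SimplexCategory) (g : Y ⟶ Z) (h : Z ⟶ X), Z.len < k ∧ g ≫ h = f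
  downward_closed := by
    rintro Y Y' f ⟨Z, g, h, hZ, rfl⟩ g'
    exact ⟨Z, g' ≫ g, h, hZ, by simp⟩

lemma fsieve_le {k : ℕ} {X : SimplexCategory} {S : Sieve X}
    (hS : ∀ (Y : SimplexCategory) (f : Y ⟶ X), (Y.len : ℕ∞) < (k : ℕ∞) → S.arrows f) :
    fsieve k X ≤ S := by
  rintro Y f ⟨Z, g, h, hZ, rfl⟩
  exact S.downward_closed (hS Z h (by exact_mod_cast hZ)) g

lemma exists_section {W Y₀ : SimplexCategory} (hle : Y₀.len ≤ W.len) :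
    ∃ (p : W ⟶ Y₀) (i : Y₀ ⟶ W), i ≫ p = 𝟙 Y₀ := by
  refine ⟨SimplexCategory.Hom.mk
      ⟨fun x => ⟨min x.1 Y₀.len, by omega⟩, ?_⟩,
    SimplexCategory.Hom.mk
      ⟨fun x => ⟨x.1, by have := x.2; omega⟩, ?_⟩, ?_⟩
  · intro a b hab
    simp only [Fin.mk_le_mk]
    have := Fin.le_def.mp hab
    omega
  · intro a b hab
    exact Fin.mk_le_mk.mpr (Fin.le_def.mp hab)
  · apply SimplexCategory.Hom.ext
    apply OrderHom.ext
    funext x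
    rw [comp_toOrderHom, id_toOrderHom]
    simp only [Hom.toOrderHom_mk, OrderHom.comp_coe, Function.comp_apply,
      OrderHom.coe_mk, OrderHom.id_coe, id_eq]
    apply Fin.ext
    have hx := x.2
    show min x.1 Y₀.len = x.1
    omega

/-- A sieve not containing the identity only contains maps factoring through
lower dimension. -/
lemma le_fsieve_of_not_id {W : SimplexCategory} {R : Sieve W} (hR : ¬ R.arrows (𝟙 W)) :
    R ≤ fsieve W.len W := by
  intro Y f hf
  have hns : ¬ Function.Surjective f.toOrderHom := by
    intro hs
    haveI : Epi f := SimplexCategory.epi_iff_surjective.mpr hs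
    haveI : IsSplitEpi f := isSplitEpi_of_epi f
    have := R.downward_closed hf (section_ f)
    rw [IsSplitEpi.id f] at this
    exact hR this
  rcases hlen : W.len with _ | n
  · exact absurd (fun b => ⟨⟨0, Nat.succ_pos _⟩, by
      apply Fin.ext
      have h1 := (f.toOrderHom ⟨0, Nat.succ_pos _⟩).2
      have h2 := b.2
      omega⟩) hns
  · have hW : mk (n + 1) = W := by rw [← hlen]
    subst hW
    obtain ⟨i, θ', hθ⟩ := eq_comp_δ_of_not_surjective f hns
    exact ⟨mk n, θ', δ i, by simp [len_mk], hθ.symm⟩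

lemma fsieve_mem (J : GrothendieckTopology SimplexCategory) (k : ℕ)
    (hk : ∃ (X Y : SimplexCategory) (S : Sieve X) (f : Y ⟶ X),
      S ∈ J X ∧ ¬ S.arrows f ∧ Y.len = k) (X : SimplexCategory) :
    fsieve k X ∈ J X := by
  obtain ⟨X₀, Y₀, S₀, f₀, hS₀, hf₀, hY₀⟩ := hk
  have hR₀ : S₀.pullback f₀ ∈ J Y₀ := J.pullback_stable f₀ hS₀
  have h1 : ¬ (S₀.pullback f₀).arrows (𝟙 Y₀) := by
    simpa [Sieve.pullback_apply] using hf₀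
  -- Step A : every object of dimension ≥ k has a covering sieve without the identity
  have stepA : ∀ W : SimplexCategory, k ≤ W.len →
      ∃ R : Sieve W, R ∈ J W ∧ ¬ R.arrows (𝟙 W) := by
    intro W hW
    obtain ⟨p, i, hip⟩ := exists_section (hY₀ ▸ hW)
    refine ⟨(S₀.pullback f₀).pullback p, J.pullback_stable p hR₀, ?_⟩
    intro hmem
    have hp : (S₀.pullback f₀).arrows p := by simpa using hmem
    have := (S₀.pullback f₀).downward_closed hp i
    rw [hip] at this
    exact h1 this
  -- Step C : strong induction on the dimension
  suffices h : ∀ n (X : SimplexCategory), X.len = n → fsieve k X ∈ J X by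
    exact h X.len X rfl
  intro n
  induction n using Nat.strong_induction_on with
  | _ n IH =>
    intro X hX
    by_cases hnk : n < k
    · have hid : (fsieve k X).arrows (𝟙 X) := ⟨X, 𝟙 X, 𝟙 X, hX ▸ hnk, Category.id_comp _⟩
      rw [Sieve.id_mem_iff_eq_top.mp hid]
      exact J.top_mem X
    · push_neg at hnk
      obtain ⟨R, hRJ, hR1⟩ := stepA X (by omega)
      have hA1 : fsieve X.len X ∈ J X :=
        J.superset_covering (le_fsieve_of_not_id hR1) hRJ
      refine J.transitive hA1 (fsieve k X) ?_
      rintro Y f ⟨Z, g, h, hZ, rfl⟩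
      have hZJ : fsieve k Z ∈ J Z := IH Z.len (by omega) Z rfl
      refine J.superset_covering ?_ (J.pullback_stable g hZJ)
      rintro Y' e he
      obtain ⟨Z', a, b, hZ', hab⟩ := he
      refine ⟨Z', a, b ≫ h, hZ', ?_⟩
      rw [← Category.assoc, hab, Category.assoc]

lemma jm_lt_ne {m m' : ℕ∞} (hlt : m < m') : Jm m ≠ Jm m' := by
  intro heq
  obtain ⟨k, hm⟩ : ∃ k : ℕ, m = (k : ℕ∞) := by
    induction m using WithTop.recTopCoe with
    | top => exact absurd hlt (not_lt_of_ge le_top)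
    | coe k => exact ⟨k, rfl⟩
  have hS1 : fsieve k (mk k) ∈ Jm m (mk k) := by
    intro Y f hf
    rw [hm] at hf
    exact ⟨Y, 𝟙 Y, f, by exact_mod_cast hf, Category.id_comp f⟩
  rw [heq] at hS1
  have := hS1 (mk k) (𝟙 (mk k)) (by rw [len_mk, ← hm]; exact hlt)
  obtain ⟨Z, g, h, hZ, hgh⟩ := this
  haveI : IsSplitMono g := IsSplitMono.mk' ⟨h, hgh⟩
  have := SimplexCategory.len_le_of_mono g
  rw [len_mk] at this
  omega

end Stmt6Aux

open Stmt6Aux in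
theorem stmt6 :
    ∃ T : ℕ∞ → GrothendieckTopology SimplexCategory,
      (∀ (m : ℕ∞) (X : SimplexCategory) (S : Sieve X),
        S ∈ T m X ↔ ∀ (Y : SimplexCategory) (f : Y ⟶ X), (Y.len : ℕ∞) < m → S.arrows f) ∧
      Function.Bijective T ∧
      (∀ (X : SimplexCategory) (S : Sieve X), S ∈ T 0 X) ∧
      (∀ (X : SimplexCategory) (S : Sieve X), S ∈ T ⊤ X ↔ S = ⊤) := by
  refine ⟨Jm, fun m X S => Iff.rfl, ⟨?_, ?_⟩, ?_, ?_⟩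
  · -- injective
    intro m m' h
    by_contra hne
    rcases lt_trichotomy m m' with h1 | h1 | h1
    · exact jm_lt_ne h1 h
    · exact hne h1
    · exact jm_lt_ne h1 h.symm
  · -- surjective
    intro J
    classical
    by_cases hA : (∃ (X Y : SimplexCategory) (S : Sieve X) (f : Y ⟶ X),
        S ∈ J X ∧ ¬ S.arrows f)
    · set A : Set ℕ := {k | ∃ (X Y : SimplexCategory) (S : Sieve X) (f : Y ⟶ X),
        S ∈ J X ∧ ¬ S.arrows f ∧ Y.len = k} with hAdef
      have hAne : A.Nonempty := by
        obtain ⟨X, Y, S, f, hS, hf⟩ := hA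
        exact ⟨Y.len, X, Y, S, f, hS, hf, rfl⟩
      set k := sInf A with hkdef
      have hkA : k ∈ A := Nat.sInf_mem hAne
      refine ⟨(k : ℕ∞), ?_⟩
      apply GrothendieckTopology.ext
      funext X
      ext S
      constructor
      · intro hS
        exact J.superset_covering (fsieve_le hS) (fsieve_mem J k hkA X)
      · intro hS Y f hf
        by_contra hfS
        have hmem : Y.len ∈ A := ⟨X, Y, S, f, hS, hfS, rfl⟩
        have := Nat.sInf_le hmem
        have hYk : Y.len < k := by exact_mod_cast hf
        omega
    · refine ⟨⊤, ?_⟩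
      apply GrothendieckTopology.ext
      funext X
      ext S
      constructor
      · intro hS
        have : S = ⊤ := by
          apply Sieve.ext
          intro Y f
          simp only [Sieve.top_apply, iff_true]
          exact hS Y f (ENat.coe_lt_top Y.len)
        rw [this]
        exact J.top_mem X
      · intro hS Y f _
        by_contra hf
        exact hA ⟨X, Y, S, f, hS, hf⟩
  · -- m = 0 : everything covers
    intro X S Y f h
    exact absurd h (not_lt.mpr zero_le)
  · -- m = ⊤ : only maximal sieves cover
    intro X S
    constructor
    · intro h
      apply Sieve.ext
      intro Y f
      simp only [Sieve.top_apply, iff_true]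
      exact h Y f (ENat.coe_lt_top Y.len)
    · rintro rfl Y f _
      trivial
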